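/- arXiv:1304.4549 — 5 statements merged into one kernel-verified Lean document; each statement's English description precedes it below -/
import Mathlib

section
/- Let λ₁,…,λ_K > 0, vectors u₁,…,u_K ∈ ℝ^T with u = Σ_k u_k, and a subset K* ⊆ {1,…,K}. Suppose the restricted eigenvalue condition |u|₂² ≥ κ² Σ_{k∈K*} |u_k|₂² holds and Σ_{k∈K*ᶜ} λ_k |u_k|₂ ≤ Σ_{k∈K*} λ_k |u_k|₂. Then Σ_{k=1}^K λ_k |u_k|₂ ≤ (2/κ)(Σ_{k∈K*} λ_k²)^{1/2} |u|₂. -/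
open BigOperators

/-- Euclidean norm of a finite real vector. -/
noncomputable def fin_enorm {n : ℕ} (w : Fin n → ℝ) : ℝ := Real.sqrt (∑ t, w t ^ 2)

/-- Group-restricted eigenvalue plus Cauchy–Schwarz: if `u = Σ_k u_k`,
`|u|₂² ≥ κ² Σ_{k∈K*} |u_k|₂²` and `Σ_{k∈K*ᶜ} λ_k |u_k|₂ ≤ Σ_{k∈K*} λ_k |u_k|₂`, then
`Σ_k λ_k |u_k|₂ ≤ (2/κ) (Σ_{k∈K*} λ_k²)^{1/2} |u|₂`. -/
theorem gre_cauchy_schwarz {K T : ℕ} (lam : Fin K → ℝ) (hlam : ∀ k, 0 < lam k)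
    (u : Fin K → Fin T → ℝ) (utot : Fin T → ℝ) (hu : utot = ∑ k, u k)
    (Kstar : Finset (Fin K)) (κ : ℝ) (hκ : 0 < κ)
    (hGRE : κ ^ 2 * ∑ k ∈ Kstar, fin_enorm (u k) ^ 2 ≤ fin_enorm utot ^ 2)
    (hcone : ∑ k ∈ Kstarᶜ, lam k * fin_enorm (u k) ≤ ∑ k ∈ Kstar, lam k * fin_enorm (u k)) :
    ∑ k, lam k * fin_enorm (u k) ≤
      (2 / κ) * Real.sqrt (∑ k ∈ Kstar, lam k ^ 2) * fin_enorm utot := by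
  have hsplit : ∑ k, lam k * fin_enorm (u k)
      = ∑ k ∈ Kstar, lam k * fin_enorm (u k) + ∑ k ∈ Kstarᶜ, lam k * fin_enorm (u k) :=
    (Finset.sum_add_sum_compl Kstar _).symm
  have hS0 : (0:ℝ) ≤ ∑ k ∈ Kstar, lam k * fin_enorm (u k) :=
    Finset.sum_nonneg fun k _ => mul_nonneg (hlam k).le (Real.sqrt_nonneg _)
  have hCS : (∑ k ∈ Kstar, lam k * fin_enorm (u k)) ^ 2
      ≤ (∑ k ∈ Kstar, lam k ^ 2) * ∑ k ∈ Kstar, fin_enorm (u k) ^ 2 :=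
    Finset.sum_mul_sq_le_sq_mul_sq Kstar lam (fun k => fin_enorm (u k))
  have hsum0 : (0:ℝ) ≤ ∑ k ∈ Kstar, fin_enorm (u k) ^ 2 :=
    Finset.sum_nonneg fun k _ => sq_nonneg _
  have hlam0 : (0:ℝ) ≤ ∑ k ∈ Kstar, lam k ^ 2 :=
    Finset.sum_nonneg fun k _ => sq_nonneg _
  have hut0 : (0:ℝ) ≤ fin_enorm utot := Real.sqrt_nonneg _
  -- from GRE: sqrt(∑ enorm²) ≤ enorm utot / κ
  have hGRE' : Real.sqrt (∑ k ∈ Kstar, fin_enorm (u k) ^ 2) ≤ fin_enorm utot / κ := by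
    rw [show fin_enorm utot / κ = Real.sqrt ((fin_enorm utot / κ)^2) by
      rw [Real.sqrt_sq (by positivity)]]
    apply Real.sqrt_le_sqrt
    rw [div_pow]
    rw [le_div_iff₀ (by positivity)]
    linarith
  have key : ∑ k ∈ Kstar, lam k * fin_enorm (u k)
      ≤ Real.sqrt (∑ k ∈ Kstar, lam k ^ 2) * (fin_enorm utot / κ) := by
    have h1 : ∑ k ∈ Kstar, lam k * fin_enorm (u k)
        ≤ Real.sqrt (∑ k ∈ Kstar, lam k ^ 2) *
          Real.sqrt (∑ k ∈ Kstar, fin_enorm (u k) ^ 2) := by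
      rw [← Real.sqrt_mul hlam0]
      rw [show ∑ k ∈ Kstar, lam k * fin_enorm (u k)
        = Real.sqrt ((∑ k ∈ Kstar, lam k * fin_enorm (u k))^2) by rw [Real.sqrt_sq hS0]]
      exact Real.sqrt_le_sqrt hCS
    exact h1.trans (mul_le_mul_of_nonneg_left hGRE' (Real.sqrt_nonneg _))
  calc ∑ k, lam k * fin_enorm (u k) ≤ 2 * ∑ k ∈ Kstar, lam k * fin_enorm (u k) := by
        rw [hsplit]; linarith
    _ ≤ 2 * (Real.sqrt (∑ k ∈ Kstar, lam k ^ 2) * (fin_enorm utot / κ)) := by linarith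
    _ = (2 / κ) * Real.sqrt (∑ k ∈ Kstar, lam k ^ 2) * fin_enorm utot := by ring
end

section
/- Let R be a T×q matrix, D₁, D₂ be T×T positive definite diagonal matrices, and Y be the T×T diagonal matrix with entries y_t. Set M = (Rᵀ(Y² + D₁⁻¹D₂⁻¹)R)⁺. Then ‖Y R M Rᵀ Y‖ ≤ max_t y_t² / (y_t² + (D₁)_{tt}⁻¹(D₂)_{tt}⁻¹). -/
open Matrix BigOperators

/-- Euclidean norm of a finite real vector. -/
noncomputable def euclidEnorm {n : ℕ} (w : Fin n → ℝ) : ℝ := Real.sqrt (∑ t, w t ^ 2)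

/-- Uniqueness of the Moore–Penrose pseudoinverse. -/
theorem penrose_unique {q : ℕ} (N B C : Matrix (Fin q) (Fin q) ℝ)
    (hB1 : N * B * N = N) (hB2 : B * N * B = B)
    (hB3 : (N * B)ᵀ = N * B) (hB4 : (B * N)ᵀ = B * N)
    (hC1 : N * C * N = N) (hC2 : C * N * C = C)
    (hC3 : (N * C)ᵀ = N * C) (hC4 : (C * N)ᵀ = C * N) : B = C := by
  have h1 : B = B * N * C := by
    calc B = B * N * B := hB2.symm
    _ = B * (N * B)ᵀ := by rw [hB3, Matrix.mul_assoc]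
    _ = B * (Bᵀ * Nᵀ) := by rw [Matrix.transpose_mul]
    _ = B * (Bᵀ * (N * C * N)ᵀ) := by rw [hC1]
    _ = B * (Bᵀ * (Nᵀ * (N * C)ᵀ)) := by
        simp only [Matrix.transpose_mul, Matrix.mul_assoc]
    _ = B * (Bᵀ * (Nᵀ * (N * C))) := by rw [hC3]
    _ = B * (N * B)ᵀ * (N * C) := by
        rw [Matrix.transpose_mul N B]; simp only [Matrix.mul_assoc]
    _ = B * (N * B) * (N * C) := by rw [hB3]
    _ = B * N * B * (N * C) := by simp only [Matrix.mul_assoc]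
    _ = B * (N * C) := by rw [hB2]
    _ = B * N * C := by simp only [Matrix.mul_assoc]
  have h2 : C = B * N * C := by
    calc C = C * N * C := hC2.symm
    _ = Nᵀ * Cᵀ * C := by rw [← Matrix.transpose_mul, hC4]
    _ = (N * B * N)ᵀ * Cᵀ * C := by rw [hB1]
    _ = (B * N)ᵀ * ((C * N)ᵀ * C) := by
        simp only [Matrix.transpose_mul, Matrix.mul_assoc]
    _ = B * N * (C * N * C) := by rw [hB4, hC4, Matrix.mul_assoc]
    _ = B * N * C := by rw [hC2]
  rw [h1, ← h2]

/-- Contractivity of a symmetric idempotent matrix. -/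
theorem enorm_proj_le {n : ℕ} (P : Matrix (Fin n) (Fin n) ℝ)
    (hsym : Pᵀ = P) (hidem : P * P = P) (v : Fin n → ℝ) :
    euclidEnorm (P.mulVec v) ≤ euclidEnorm v := by
  have key : (∑ t, (P.mulVec v) t ^ 2) = ∑ t, v t * (P.mulVec v) t := by
    have h1 : ∑ t, (P.mulVec v) t ^ 2 = (P.mulVec v) ⬝ᵥ (P.mulVec v) := by
      simp [dotProduct, sq]
    have h2 : ∑ t, v t * (P.mulVec v) t = v ⬝ᵥ (P.mulVec v) := by
      simp [dotProduct]
    rw [h1, h2]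
    calc (P.mulVec v) ⬝ᵥ (P.mulVec v)
        = (v ᵥ* Pᵀ) ⬝ᵥ (P.mulVec v) := by rw [Matrix.vecMul_transpose]
    _ = v ⬝ᵥ (Pᵀ.mulVec (P.mulVec v)) := (dotProduct_mulVec v Pᵀ _).symm
    _ = v ⬝ᵥ ((Pᵀ * P).mulVec v) := by rw [Matrix.mulVec_mulVec]
    _ = v ⬝ᵥ (P.mulVec v) := by rw [hsym, hidem]
  have cs : (∑ t, v t * (P.mulVec v) t) ^ 2 ≤
      (∑ t, v t ^ 2) * ∑ t, (P.mulVec v) t ^ 2 :=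
    Finset.sum_mul_sq_le_sq_mul_sq _ _ _
  have hU : (0:ℝ) ≤ ∑ t, (P.mulVec v) t ^ 2 := Finset.sum_nonneg fun t _ => sq_nonneg _
  have hV : (0:ℝ) ≤ ∑ t, v t ^ 2 := Finset.sum_nonneg fun t _ => sq_nonneg _
  have hle : ∑ t, (P.mulVec v) t ^ 2 ≤ ∑ t, v t ^ 2 := by
    rcases eq_or_lt_of_le hU with h0 | h0
    · rw [← h0]; exact hV
    · have h3 : (∑ t, (P.mulVec v) t ^ 2) ^ 2 ≤
          (∑ t, v t ^ 2) * ∑ t, (P.mulVec v) t ^ 2 := by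
        calc (∑ t, (P.mulVec v) t ^ 2) ^ 2
            = (∑ t, v t * (P.mulVec v) t) ^ 2 := by rw [key]
        _ ≤ (∑ t, v t ^ 2) * ∑ t, (P.mulVec v) t ^ 2 := cs
      rw [sq] at h3
      exact le_of_mul_le_mul_right h3 h0
  exact Real.sqrt_le_sqrt hle

/-- Diagonal scaling bound. -/
theorem enorm_diag_le {n : ℕ} (d : Fin n → ℝ) (s : ℝ) (hs0 : 0 ≤ s)
    (hs : ∀ t, d t ^ 2 ≤ s) (v : Fin n → ℝ) :
    euclidEnorm ((Matrix.diagonal d).mulVec v) ≤ Real.sqrt s * euclidEnorm v := by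
  unfold euclidEnorm
  rw [← Real.sqrt_mul hs0]
  apply Real.sqrt_le_sqrt
  calc ∑ t, ((Matrix.diagonal d).mulVec v) t ^ 2 = ∑ t, d t ^ 2 * v t ^ 2 := by
        simp [Matrix.mulVec_diagonal, mul_pow]
  _ ≤ ∑ t, s * v t ^ 2 :=
      Finset.sum_le_sum fun t _ => mul_le_mul_of_nonneg_right (hs t) (sq_nonneg _)
  _ = s * ∑ t, v t ^ 2 := by rw [Finset.mul_sum]

/-- Inequality (21b)–(22b) of Lemma 3: with `Y = diag(y)`, `D₁ = diag(d₁)`,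
`D₂ = diag(d₂)` positive diagonal matrices and `M = (Rᵀ(Y² + D₁⁻¹D₂⁻¹)R)⁺`, the
spectral norm of `Y R M Rᵀ Y` is at most
`max_t y_t² / (y_t² + d₁(t)⁻¹ d₂(t)⁻¹)`. -/
theorem spectral_norm_YRMRY_bound {T q : ℕ} (hT : 0 < T)
    (R : Matrix (Fin T) (Fin q) ℝ) (y d₁ d₂ : Fin T → ℝ)
    (hd₁ : ∀ t, 0 < d₁ t) (hd₂ : ∀ t, 0 < d₂ t)
    (N M : Matrix (Fin q) (Fin q) ℝ)
    (hN : N = Rᵀ * Matrix.diagonal (fun t => y t ^ 2 + (d₁ t)⁻¹ * (d₂ t)⁻¹) * R)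
    -- the four Penrose conditions for `M = N⁺`
    (hM1 : N * M * N = N) (hM2 : M * N * M = M)
    (hM3 : (N * M)ᵀ = N * M) (hM4 : (M * N)ᵀ = M * N) :
    ∀ w : Fin T → ℝ,
      euclidEnorm ((Matrix.diagonal y * R * M * Rᵀ * Matrix.diagonal y).mulVec w) ≤
        (Finset.univ.sup' (Finset.univ_nonempty_iff.mpr ⟨⟨0, hT⟩⟩)
          fun t => y t ^ 2 / (y t ^ 2 + (d₁ t)⁻¹ * (d₂ t)⁻¹)) * euclidEnorm w := by
  intro w
  obtain ⟨c, hc_def⟩ : ∃ c : Fin T → ℝ, c = fun t => y t ^ 2 + (d₁ t)⁻¹ * (d₂ t)⁻¹ :=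
    ⟨_, rfl⟩
  have hN' : N = Rᵀ * Matrix.diagonal c * R := by rw [hc_def]; exact hN
  have hc : ∀ t, 0 < c t := by
    intro t; rw [hc_def]
    exact add_pos_of_nonneg_of_pos (sq_nonneg _)
      (mul_pos (inv_pos.mpr (hd₁ t)) (inv_pos.mpr (hd₂ t)))
  obtain ⟨g, hg_def⟩ : ∃ g : Fin T → ℝ, g = fun t => Real.sqrt (c t) := ⟨_, rfl⟩
  have hg : ∀ t, 0 < g t := by
    intro t; rw [hg_def]; exact Real.sqrt_pos.mpr (hc t)
  have hgg : ∀ t, g t * g t = c t := by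
    intro t; rw [hg_def]; exact Real.mul_self_sqrt (hc t).le
  obtain ⟨G, hG_def⟩ : ∃ G, G = Matrix.diagonal g := ⟨_, rfl⟩
  obtain ⟨D, hD_def⟩ : ∃ D, D = Matrix.diagonal (fun t => y t / g t) := ⟨_, rfl⟩
  obtain ⟨S, hS_def⟩ : ∃ S, S = G * R := ⟨_, rfl⟩
  have hGsym : Gᵀ = G := by rw [hG_def]; exact Matrix.diagonal_transpose g
  have hST : Sᵀ = Rᵀ * G := by rw [hS_def, Matrix.transpose_mul, hGsym]
  have hGG : G * G = Matrix.diagonal c := by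
    rw [hG_def, Matrix.diagonal_mul_diagonal]
    exact congrArg Matrix.diagonal (funext hgg)
  have hSS : Sᵀ * S = N := by
    calc Sᵀ * S = Rᵀ * (G * G) * R := by
          rw [hST, hS_def]; simp only [Matrix.mul_assoc]
    _ = Rᵀ * Matrix.diagonal c * R := by rw [hGG]
    _ = N := hN'.symm
  obtain ⟨P, hP_def⟩ : ∃ P, P = S * M * Sᵀ := ⟨_, rfl⟩
  have hNsym : Nᵀ = N := by
    rw [hN', Matrix.transpose_mul, Matrix.transpose_mul, Matrix.transpose_transpose,
      Matrix.diagonal_transpose, Matrix.mul_assoc]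
  have hMsym : Mᵀ = M := by
    refine (penrose_unique N Mᵀ M ?_ ?_ ?_ ?_ hM1 hM2 hM3 hM4)
    · calc N * Mᵀ * N = Nᵀ * Mᵀ * Nᵀ := by rw [hNsym]
      _ = (N * M * N)ᵀ := by simp only [Matrix.transpose_mul, Matrix.mul_assoc]
      _ = N := by rw [hM1, hNsym]
    · calc Mᵀ * N * Mᵀ = Mᵀ * Nᵀ * Mᵀ := by rw [hNsym]
      _ = (M * N * M)ᵀ := by simp only [Matrix.transpose_mul, Matrix.mul_assoc]
      _ = Mᵀ := by rw [hM2]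
    · have h : N * Mᵀ = M * N := by
        calc N * Mᵀ = Nᵀ * Mᵀ := by rw [hNsym]
        _ = (M * N)ᵀ := (Matrix.transpose_mul M N).symm
        _ = M * N := hM4
      rw [h]; exact hM4
    · have h : Mᵀ * N = N * M := by
        calc Mᵀ * N = Mᵀ * Nᵀ := by rw [hNsym]
        _ = (N * M)ᵀ := (Matrix.transpose_mul N M).symm
        _ = N * M := hM3
      rw [h]; exact hM3
  have hPsym : Pᵀ = P := by
    rw [hP_def]
    calc (S * M * Sᵀ)ᵀ = Sᵀᵀ * (Mᵀ * Sᵀ) := by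
          simp only [Matrix.transpose_mul, Matrix.mul_assoc]
    _ = S * (M * Sᵀ) := by rw [Matrix.transpose_transpose, hMsym]
    _ = S * M * Sᵀ := by rw [Matrix.mul_assoc]
  have hPidem : P * P = P := by
    rw [hP_def]
    calc (S * M * Sᵀ) * (S * M * Sᵀ) = S * (M * (Sᵀ * S) * M) * Sᵀ := by
          simp only [Matrix.mul_assoc]
    _ = S * (M * N * M) * Sᵀ := by rw [hSS]
    _ = S * M * Sᵀ := by rw [hM2]
  have hyDG : Matrix.diagonal y = D * G := by
    rw [hD_def, hG_def, Matrix.diagonal_mul_diagonal]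
    exact congrArg Matrix.diagonal
      (funext fun t => (div_mul_cancel₀ (y t) (hg t).ne').symm)
  have hyGD : Matrix.diagonal y = G * D := by
    rw [hG_def, hD_def, Matrix.diagonal_mul_diagonal]
    refine congrArg Matrix.diagonal (funext fun t => ?_)
    rw [mul_comm, div_mul_cancel₀ (y t) (hg t).ne']
  have hA : Matrix.diagonal y * R * M * Rᵀ * Matrix.diagonal y = D * P * D := by
    nth_rewrite 2 [hyGD]
    rw [hyDG, hP_def, hST, hS_def]
    simp only [Matrix.mul_assoc]
  obtain ⟨s, hs_eq⟩ : ∃ s : ℝ, s = Finset.univ.sup'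
      (Finset.univ_nonempty_iff.mpr ⟨⟨0, hT⟩⟩)
      (fun t => y t ^ 2 / (y t ^ 2 + (d₁ t)⁻¹ * (d₂ t)⁻¹)) := ⟨_, rfl⟩
  have hst : ∀ t, (y t / g t) ^ 2 ≤ s := by
    intro t
    have h1 : (y t / g t) ^ 2 = y t ^ 2 / (y t ^ 2 + (d₁ t)⁻¹ * (d₂ t)⁻¹) := by
      rw [div_pow, hg_def]
      have h2 : Real.sqrt (c t) ^ 2 = c t := Real.sq_sqrt (hc t).le
      rw [h2, hc_def]
    rw [h1, hs_eq]
    exact Finset.le_sup'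
      (fun t => y t ^ 2 / (y t ^ 2 + (d₁ t)⁻¹ * (d₂ t)⁻¹)) (Finset.mem_univ t)
  have hs0 : 0 ≤ s := le_trans (sq_nonneg _) (hst ⟨0, hT⟩)
  rw [← hs_eq, hA, ← Matrix.mulVec_mulVec, ← Matrix.mulVec_mulVec]
  calc euclidEnorm (D.mulVec (P.mulVec (D.mulVec w)))
      ≤ Real.sqrt s * euclidEnorm (P.mulVec (D.mulVec w)) := by
        rw [hD_def]; exact enorm_diag_le _ s hs0 hst _
  _ ≤ Real.sqrt s * euclidEnorm (D.mulVec w) :=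
      mul_le_mul_of_nonneg_left (enorm_proj_le P hPsym hPidem _) (Real.sqrt_nonneg s)
  _ ≤ Real.sqrt s * (Real.sqrt s * euclidEnorm w) := by
      refine mul_le_mul_of_nonneg_left ?_ (Real.sqrt_nonneg s)
      rw [hD_def]; exact enorm_diag_le _ s hs0 hst _
  _ = s * euclidEnorm w := by rw [← mul_assoc, Real.mul_self_sqrt hs0]
end

section
/- Let R be a T×q matrix, D_a and D_b positive definite T×T diagonal matrices with (D_a)_{tt} = a_t, (D_b)_{tt} = b_t, and suppose b_t ≤ D̂ a_t for all t with D̂ ≥ 1 and a_t ≤ A for all t. Let M = (Rᵀ(Y² + D_a⁻¹D_b⁻¹)R)⁺ for any diagonal Y. Then ‖R M^{1/2}‖² ≤ D̂ A², where ‖·‖ is the spectral norm. -/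
open Matrix BigOperators

/-- Euclidean norm of a finite real vector. -/
noncomputable def euclidNorm {n : ℕ} (w : Fin n → ℝ) : ℝ := Real.sqrt (∑ t, w t ^ 2)

lemma quad_form_eq {T q : ℕ} (B : Matrix (Fin T) (Fin q) ℝ)
    (Dg : Matrix (Fin T) (Fin T) ℝ) (w : Fin q → ℝ) :
    w ⬝ᵥ (Bᵀ * Dg * B).mulVec w = (B.mulVec w) ⬝ᵥ Dg.mulVec (B.mulVec w) := by
  rw [← Matrix.mulVec_mulVec, ← Matrix.mulVec_mulVec, Matrix.dotProduct_mulVec,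
    Matrix.vecMul_transpose]

lemma enorm_sq {n : ℕ} (w : Fin n → ℝ) : euclidNorm w ^ 2 = ∑ t, w t ^ 2 := by
  rw [euclidNorm, Real.sq_sqrt (Finset.sum_nonneg fun t _ => sq_nonneg _)]

/-- Bound on `‖R M^{1/2}‖` from the end of the proof of Theorem 3: with `D_a = diag(a)`,
`D_b = diag(b)` positive, `b_t ≤ D̂ a_t`, `a_t ≤ A`, and
`M = (Rᵀ(Y² + D_a⁻¹ D_b⁻¹)R)⁺`, the squared spectral norm of `R M^{1/2}` is at most
`D̂ A²`. -/
theorem RMhalf_norm_bound {T q : ℕ} (R : Matrix (Fin T) (Fin q) ℝ)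
    (a b y : Fin T → ℝ) (ha : ∀ t, 0 < a t) (hb : ∀ t, 0 < b t)
    (D A : ℝ) (hD : 1 ≤ D) (hba : ∀ t, b t ≤ D * a t) (haA : ∀ t, a t ≤ A)
    (N M : Matrix (Fin q) (Fin q) ℝ)
    (hN : N = Rᵀ * Matrix.diagonal (fun t => y t ^ 2 + (a t)⁻¹ * (b t)⁻¹) * R)
    -- the four Penrose conditions for `M = N⁺`
    (hM1 : N * M * N = N) (hM2 : M * N * M = M)
    (hM3 : (N * M)ᵀ = N * M) (hM4 : (M * N)ᵀ = M * N)
    (Msqrt : Matrix (Fin q) (Fin q) ℝ) (hMs : Msqrt.PosSemidef)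
    (hMs2 : Msqrt * Msqrt = M) :
    ∀ w : Fin q → ℝ, euclidNorm ((R * Msqrt).mulVec w) ^ 2 ≤ D * A ^ 2 * euclidNorm w ^ 2 := by
  intro w
  have hA2 : 0 ≤ D * A ^ 2 := mul_nonneg (by linarith) (sq_nonneg A)
  set c : Fin T → ℝ := fun t => y t ^ 2 + (a t)⁻¹ * (b t)⁻¹ with hc
  -- symmetry facts
  have hMsT : Msqrtᵀ = Msqrt := by
    have h := hMs.1
    rw [Matrix.IsHermitian, Matrix.conjTranspose] at h
    convert h using 1; ext i j; simp
  have hNT : Nᵀ = N := by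
    rw [hN]
    simp [Matrix.transpose_mul, Matrix.mul_assoc]
  set P : Matrix (Fin q) (Fin q) ℝ := Msqrt * N * Msqrt with hP
  have hPsym : Pᵀ = P := by
    simp [hP, Matrix.transpose_mul, hMsT, hNT, Matrix.mul_assoc]
  have hPP : P * P = P := by
    have h1 : P * P = Msqrt * (N * (Msqrt * Msqrt) * N) * Msqrt := by
      rw [hP]; noncomm_ring
    rw [h1, hMs2, hM1, hP]
  -- the quadratic form of P equals the weighted quadratic form of u
  set u : Fin T → ℝ := (R * Msqrt).mulVec w with hu
  have hPN : (R * Msqrt)ᵀ * Matrix.diagonal c * (R * Msqrt) = P := by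
    rw [Matrix.transpose_mul, hMsT, hP, hN]
    simp [Matrix.mul_assoc]
  have hquad : w ⬝ᵥ P.mulVec w = u ⬝ᵥ (Matrix.diagonal c).mulVec u := by
    rw [← hPN, quad_form_eq]
  -- projection bound : w ⬝ᵥ P w ≤ w ⬝ᵥ w
  have hproj : w ⬝ᵥ P.mulVec w ≤ w ⬝ᵥ w := by
    set Q : Matrix (Fin q) (Fin q) ℝ := 1 - P with hQ
    have hQsym : Qᵀ = Q := by simp [hQ, Matrix.transpose_sub, hPsym]
    have hQQ : Q * Q = Q := by
      have : Q * Q = 1 - P - P + P * P := by rw [hQ]; noncomm_ring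
      rw [this, hPP, hQ]; noncomm_ring
    have h0 : 0 ≤ w ⬝ᵥ Q.mulVec w := by
      have heq : w ⬝ᵥ Q.mulVec w = (Q.mulVec w) ⬝ᵥ (Q.mulVec w) := by
        conv_lhs => rw [← hQQ]
        rw [← Matrix.mulVec_mulVec, Matrix.dotProduct_mulVec]
        rw [← hQsym, Matrix.vecMul_transpose, hQsym]
      rw [heq]
      exact Finset.sum_nonneg fun i _ => mul_self_nonneg _
    have hsub : Q.mulVec w = w - P.mulVec w := by
      rw [hQ, Matrix.sub_mulVec, Matrix.one_mulVec]
    rw [hsub, dotProduct_sub] at h0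
    linarith
  -- pointwise bound
  have hpt : ∀ t, u t ^ 2 ≤ D * A ^ 2 * (u t * ((Matrix.diagonal c).mulVec u t)) := by
    intro t
    have hab : 0 < a t * b t := mul_pos (ha t) (hb t)
    have h1 : (1 : ℝ) ≤ D * A ^ 2 * ((a t)⁻¹ * (b t)⁻¹) := by
      rw [← mul_inv, ← div_eq_mul_inv, le_div_iff₀ hab, one_mul]
      have h0A : 0 ≤ a t := (ha t).le
      have haa : a t * a t ≤ A * A :=
        mul_le_mul (haA t) (haA t) h0A (h0A.trans (haA t))
      nlinarith [mul_le_mul_of_nonneg_left (hba t) h0A,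
        mul_le_mul_of_nonneg_left haa (by linarith : (0:ℝ) ≤ D)]
    have h2 : (1 : ℝ) ≤ D * A ^ 2 * c t := by
      have : D * A ^ 2 * ((a t)⁻¹ * (b t)⁻¹) ≤ D * A ^ 2 * c t := by
        apply mul_le_mul_of_nonneg_left _ hA2
        simp only [hc]
        nlinarith [sq_nonneg (y t)]
      exact h1.trans this
    have hdm : (Matrix.diagonal c).mulVec u t = c t * u t := by
      rw [Matrix.mulVec_diagonal]
    rw [hdm]
    nlinarith [mul_le_mul_of_nonneg_left h2 (sq_nonneg (u t))]
  -- assemble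
  rw [enorm_sq, enorm_sq]
  calc ∑ t, u t ^ 2
      ≤ ∑ t, D * A ^ 2 * (u t * ((Matrix.diagonal c).mulVec u t)) :=
        Finset.sum_le_sum fun t _ => hpt t
    _ = D * A ^ 2 * (u ⬝ᵥ (Matrix.diagonal c).mulVec u) := by
        rw [dotProduct, Finset.mul_sum]
    _ = D * A ^ 2 * (w ⬝ᵥ P.mulVec w) := by rw [hquad]
    _ ≤ D * A ^ 2 * (w ⬝ᵥ w) := mul_le_mul_of_nonneg_left hproj hA2
    _ = D * A ^ 2 * ∑ t, w t ^ 2 := by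
        simp [dotProduct, pow_two]
end

section
/- Let A, B, C be positive semidefinite T×T diagonal matrices and R a T×q matrix, with M = (Rᵀ(A + B)R)⁺. Then for any vector w ∈ ℝ^T, |M^{1/2} Rᵀ C^{1/2} w|₂² ≤ (max_t C_{tt}/(A_{tt} + B_{tt})) · wᵀ Π w, where Π = C^{1/2}R(Rᵀ C R)⁺ Rᵀ C^{1/2} is the orthogonal projector onto the column span of C^{1/2}R. -/
open Matrix BigOperators

/-- Euclidean norm of a finite real vector. -/
noncomputable def vecEnorm {n : ℕ} (w : Fin n → ℝ) : ℝ := Real.sqrt (∑ t, w t ^ 2)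

/-- If `Q` is symmetric and fixes `S * Sᵀ` (real matrices), then `Q` fixes `S`. -/
lemma proj_fix {m n : ℕ} (Q : Matrix (Fin m) (Fin m) ℝ) (S : Matrix (Fin m) (Fin n) ℝ)
    (hQ : Qᵀ = Q) (h : Q * (S * Sᵀ) = S * Sᵀ) : Q * S = S := by
  have h' : S * (Sᵀ * Q) = S * Sᵀ := by
    have := congrArg Matrix.transpose h
    simpa [transpose_mul, hQ, Matrix.mul_assoc] using this
  have h2 : (Q * S - S) * (Q * S - S)ᵀ = 0 := by
    have expand : (Q * S - S) * (Q * S - S)ᵀ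
        = Q * (S * (Sᵀ * Q)) - Q * (S * Sᵀ) - S * (Sᵀ * Q) + S * Sᵀ := by
      rw [transpose_sub, transpose_mul, hQ, Matrix.sub_mul, Matrix.mul_sub, Matrix.mul_sub]
      simp only [Matrix.mul_assoc]
      abel
    rw [expand, h']
    abel
  have h3 : (Q * S - S) * (Q * S - S)ᴴ = 0 := by
    simpa [Matrix.conjTranspose_eq_transpose_of_trivial] using h2
  exact sub_eq_zero.mp (Matrix.self_mul_conjTranspose_eq_zero.mp h3)

/-- Quadratic form of `Rᵀ D R` with `D` diagonal, as a weighted sum. -/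
lemma quad_diag {T q : ℕ} (R : Matrix (Fin T) (Fin q) ℝ) (d : Fin T → ℝ) (x y : Fin q → ℝ) :
    x ⬝ᵥ (Rᵀ * Matrix.diagonal d * R).mulVec y
      = ∑ t, d t * ((R.mulVec x) t * (R.mulVec y) t) := by
  rw [Matrix.mul_assoc, ← Matrix.mulVec_mulVec, Matrix.dotProduct_mulVec,
    Matrix.vecMul_transpose, ← Matrix.mulVec_mulVec]
  simp only [dotProduct, Matrix.mulVec_diagonal]
  exact Finset.sum_congr rfl fun t _ => by ring

/-- Abstract form of steps (16b) and (17c) of the proof of Lemma 3: with diagonal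
positive semidefinite matrices `A = diag(a)`, `B = diag(b)`, `C = diag(c)`,
`M = (Rᵀ(A+B)R)⁺` and `Π = C^{1/2} R (Rᵀ C R)⁺ Rᵀ C^{1/2}` (the orthogonal projector
onto the column span of `C^{1/2} R`), one has for any `w`,
`|M^{1/2} Rᵀ C^{1/2} w|₂² ≤ (max_t c_t/(a_t + b_t)) · wᵀ Π w`. -/
theorem quadform_ratio_bound {T q : ℕ} (hT : 0 < T) (R : Matrix (Fin T) (Fin q) ℝ)
    (a b c : Fin T → ℝ) (ha : ∀ t, 0 ≤ a t) (hb : ∀ t, 0 ≤ b t) (hc : ∀ t, 0 ≤ c t)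
    (hab : ∀ t, 0 < a t + b t)
    (N M : Matrix (Fin q) (Fin q) ℝ)
    (hN : N = Rᵀ * Matrix.diagonal (fun t => a t + b t) * R)
    -- the four Penrose conditions for `M = N⁺`
    (hM1 : N * M * N = N) (hM2 : M * N * M = M)
    (hM3 : (N * M)ᵀ = N * M) (hM4 : (M * N)ᵀ = M * N)
    (Msqrt : Matrix (Fin q) (Fin q) ℝ) (hMs : Msqrt.PosSemidef) (hMs2 : Msqrt * Msqrt = M)
    (NC MC : Matrix (Fin q) (Fin q) ℝ)
    (hNC : NC = Rᵀ * Matrix.diagonal c * R)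
    -- the four Penrose conditions for `MC = (Rᵀ C R)⁺`
    (hMC1 : NC * MC * NC = NC) (hMC2 : MC * NC * MC = MC)
    (hMC3 : (NC * MC)ᵀ = NC * MC) (hMC4 : (MC * NC)ᵀ = MC * NC)
    (Pr : Matrix (Fin T) (Fin T) ℝ)
    (hPr : Pr = Matrix.diagonal (fun t => Real.sqrt (c t)) * R * MC * Rᵀ *
      Matrix.diagonal (fun t => Real.sqrt (c t))) :
    ∀ w : Fin T → ℝ,
      vecEnorm ((Msqrt * Rᵀ * Matrix.diagonal (fun t => Real.sqrt (c t))).mulVec w) ^ 2 ≤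
        (Finset.univ.sup' (Finset.univ_nonempty_iff.mpr ⟨⟨0, hT⟩⟩)
          fun t => c t / (a t + b t)) * (w ⬝ᵥ Pr.mulVec w) := by
  intro w
  set Cs : Matrix (Fin T) (Fin T) ℝ := Matrix.diagonal (fun t => Real.sqrt (c t)) with hCsdef
  set K : ℝ := Finset.univ.sup' (Finset.univ_nonempty_iff.mpr ⟨⟨0, hT⟩⟩)
      (fun t => c t / (a t + b t)) with hKdef
  -- numeric facts about K
  have hKt : ∀ t, c t ≤ K * (a t + b t) := by
    intro t
    have h1 : c t / (a t + b t) ≤ K :=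
      Finset.le_sup' (fun t => c t / (a t + b t)) (Finset.mem_univ t)
    exact (div_le_iff₀ (hab t)).mp h1
  have hK0 : 0 ≤ K := by
    have h1 : c ⟨0, hT⟩ / (a ⟨0, hT⟩ + b ⟨0, hT⟩) ≤ K :=
      Finset.le_sup' (fun t => c t / (a t + b t)) (Finset.mem_univ _)
    exact le_trans (div_nonneg (hc _) (hab _).le) h1
  -- diagonal square-root facts
  have hCsT : Csᵀ = Cs := Matrix.diagonal_transpose _
  have hCsCs : Cs * Cs = Matrix.diagonal c := by
    rw [hCsdef, Matrix.diagonal_mul_diagonal]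
    exact congrArg Matrix.diagonal (funext fun t => Real.mul_self_sqrt (hc t))
  set Ds : Matrix (Fin T) (Fin T) ℝ := Matrix.diagonal (fun t => Real.sqrt (a t + b t))
    with hDsdef
  have hDsDs : Ds * Ds = Matrix.diagonal (fun t => a t + b t) := by
    rw [hDsdef, Matrix.diagonal_mul_diagonal]
    exact congrArg Matrix.diagonal (funext fun t => Real.mul_self_sqrt (hab t).le)
  set Dsi : Matrix (Fin T) (Fin T) ℝ :=
    Matrix.diagonal (fun t => (Real.sqrt (a t + b t))⁻¹) with hDsidef
  have hDsDsi : Ds * Dsi = 1 := by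
    rw [hDsdef, hDsidef, Matrix.diagonal_mul_diagonal]
    rw [show (fun t => Real.sqrt (a t + b t) * (Real.sqrt (a t + b t))⁻¹) = fun _ => (1:ℝ) from
      funext fun t => mul_inv_cancel₀ (ne_of_gt (Real.sqrt_pos.mpr (hab t)))]
    exact Matrix.diagonal_one
  -- factorization of N and NC
  have hNS : N = (Rᵀ * Ds) * (Rᵀ * Ds)ᵀ := by
    rw [transpose_mul, Matrix.transpose_transpose, Matrix.diagonal_transpose, hN]
    rw [Matrix.mul_assoc, Matrix.mul_assoc, ← Matrix.mul_assoc Ds Ds R, hDsDs]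
  have hNCS : NC = (Rᵀ * Cs) * (Rᵀ * Cs)ᵀ := by
    rw [transpose_mul, Matrix.transpose_transpose, hCsT, hNC]
    rw [Matrix.mul_assoc, Matrix.mul_assoc, ← Matrix.mul_assoc Cs Cs R, hCsCs]
  -- N*M fixes Rᵀ, NC*MC fixes Rᵀ*Cs
  have Fix1 : (N * M) * (Rᵀ * Ds) = Rᵀ * Ds := by
    apply proj_fix _ _ hM3
    rw [← hNS]
    exact hM1
  have Fix1' : N * M * Rᵀ = Rᵀ := by
    have h := congrArg (· * Dsi) Fix1
    simpa [Matrix.mul_assoc, hDsDsi] using h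
  have Fix2 : (NC * MC) * (Rᵀ * Cs) = Rᵀ * Cs := by
    apply proj_fix _ _ hMC3
    rw [← hNCS]
    exact hMC1
  -- the key vectors
  set v : Fin q → ℝ := (Rᵀ * Cs).mulVec w with hvdef
  set z : Fin q → ℝ := M.mulVec v with hzdef
  set x : Fin q → ℝ := MC.mulVec v with hxdef
  have hNz : N.mulVec z = v := by
    rw [hzdef, hvdef, Matrix.mulVec_mulVec, Matrix.mulVec_mulVec,
      show N * M * (Rᵀ * Cs) = Rᵀ * Cs from by rw [← Matrix.mul_assoc, Fix1']]
  have hNCx : NC.mulVec x = v := by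
    rw [hxdef, hvdef, Matrix.mulVec_mulVec, Matrix.mulVec_mulVec, Fix2]
  -- abbreviations
  set Rz : Fin T → ℝ := R.mulVec z with hRzdef
  set Rx : Fin T → ℝ := R.mulVec x with hRxdef
  -- LHS equals v ⬝ᵥ z
  have hMsT : Msqrtᵀ = Msqrt := by
    rw [← Matrix.conjTranspose_eq_transpose_of_trivial]
    exact hMs.1
  have LHS_eq : vecEnorm ((Msqrt * Rᵀ * Cs).mulVec w) ^ 2 = v ⬝ᵥ z := by
    have hu : (Msqrt * Rᵀ * Cs).mulVec w = Msqrt.mulVec v := by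
      rw [hvdef, Matrix.mulVec_mulVec, Matrix.mul_assoc]
    have hsum : ∀ u : Fin q → ℝ, vecEnorm u ^ 2 = u ⬝ᵥ u := by
      intro u
      rw [vecEnorm, Real.sq_sqrt (Finset.sum_nonneg fun _ _ => sq_nonneg _)]
      simp [dotProduct, sq]
    rw [hsum, hu]
    calc Msqrt.mulVec v ⬝ᵥ Msqrt.mulVec v
        = (v ᵥ* Msqrt) ⬝ᵥ Msqrt.mulVec v := by rw [← Matrix.mulVec_transpose, hMsT]
      _ = v ⬝ᵥ (Msqrt * Msqrt).mulVec v := by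
          conv_rhs => rw [← Matrix.mulVec_mulVec, Matrix.dotProduct_mulVec]
      _ = v ⬝ᵥ z := by rw [hMs2, hzdef]
  -- quadratic form identities
  have hvz1 : v ⬝ᵥ z = ∑ t, c t * (Rz t * Rx t) := by
    rw [dotProduct_comm, ← hNCx, hNC, quad_diag]
  have hvz2 : v ⬝ᵥ z = ∑ t, (a t + b t) * (Rz t * Rz t) := by
    rw [dotProduct_comm, ← hNz, hN, quad_diag]
  have hvx : v ⬝ᵥ x = ∑ t, c t * (Rx t * Rx t) := by
    rw [dotProduct_comm, ← hNCx, hNC, quad_diag]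
  -- the projected quadratic form
  have hPrx : Pr.mulVec w = (Cs * R).mulVec x := by
    rw [hxdef, hvdef, Matrix.mulVec_mulVec, Matrix.mulVec_mulVec, hPr]
    congr 1
    simp only [Matrix.mul_assoc]
  have hG : w ⬝ᵥ Pr.mulVec w = v ⬝ᵥ x := by
    rw [hPrx, Matrix.dotProduct_mulVec, ← Matrix.mulVec_transpose, transpose_mul, hCsT,
      ← hvdef]
  -- nonnegativity of the projected form
  have hGnn : 0 ≤ ∑ t, c t * (Rx t * Rx t) :=
    Finset.sum_nonneg fun t _ => mul_nonneg (hc t) (mul_self_nonneg _)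
  -- Cauchy-Schwarz
  have hCS : (v ⬝ᵥ z) ^ 2
      ≤ (∑ t, c t * (Rz t * Rz t)) * (∑ t, c t * (Rx t * Rx t)) := by
    have h := Finset.sum_mul_sq_le_sq_mul_sq Finset.univ
      (fun t => Real.sqrt (c t) * Rz t) (fun t => Real.sqrt (c t) * Rx t)
    have e1 : ∀ t : Fin T,
        (Real.sqrt (c t) * Rz t) * (Real.sqrt (c t) * Rx t) = c t * (Rz t * Rx t) := by
      intro t
      linear_combination (Rz t * Rx t) * Real.mul_self_sqrt (hc t)
    have e2 : ∀ t : Fin T, (Real.sqrt (c t) * Rz t) ^ 2 = c t * (Rz t * Rz t) := by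
      intro t
      linear_combination (Rz t * Rz t) * Real.mul_self_sqrt (hc t)
    have e3 : ∀ t : Fin T, (Real.sqrt (c t) * Rx t) ^ 2 = c t * (Rx t * Rx t) := by
      intro t
      linear_combination (Rx t * Rx t) * Real.mul_self_sqrt (hc t)
    calc (v ⬝ᵥ z) ^ 2
        = (∑ t, (Real.sqrt (c t) * Rz t) * (Real.sqrt (c t) * Rx t)) ^ 2 := by
          rw [hvz1]
          congr 1
          exact Finset.sum_congr rfl fun t _ => (e1 t).symm
      _ ≤ (∑ t, (Real.sqrt (c t) * Rz t) ^ 2) * (∑ t, (Real.sqrt (c t) * Rx t) ^ 2) := h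
      _ = (∑ t, c t * (Rz t * Rz t)) * (∑ t, c t * (Rx t * Rx t)) := by
          rw [Finset.sum_congr rfl fun t _ => e2 t, Finset.sum_congr rfl fun t _ => e3 t]
  -- comparison of the two weighted norms
  have hβ : ∑ t, c t * (Rz t * Rz t) ≤ K * (v ⬝ᵥ z) := by
    rw [hvz2, Finset.mul_sum]
    apply Finset.sum_le_sum
    intro t _
    calc c t * (Rz t * Rz t) ≤ (K * (a t + b t)) * (Rz t * Rz t) :=
          mul_le_mul_of_nonneg_right (hKt t) (mul_self_nonneg _)
      _ = K * ((a t + b t) * (Rz t * Rz t)) := by ring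
  -- conclusion
  have hA0nn : 0 ≤ v ⬝ᵥ z := LHS_eq ▸ sq_nonneg _
  have key : (v ⬝ᵥ z) ^ 2 ≤ (K * (v ⬝ᵥ z)) * (∑ t, c t * (Rx t * Rx t)) :=
    le_trans hCS (mul_le_mul_of_nonneg_right hβ hGnn)
  rw [LHS_eq, hG, hvx]
  rcases hA0nn.eq_or_lt with h0 | h0
  · rw [← h0]
    exact mul_nonneg hK0 hGnn
  · nlinarith [key, h0]
end

section
/- Let f: ℝ^p × ℝ^q → ℝ be defined by f(φ, α) = Σ_{t=1}^T [−log(R_{t,:}α) + (1/2)(y_t R_{t,:}α − X_{t,:}φ)²] + Σ_{k=1}^K λ_k |X_{:,G_k} φ_{G_k}|₂, on the domain {(φ,α) : R_{t,:}α > 0 for all t}, where λ_k ≥ 0. Then f is jointly convex in (φ, α). -/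
open Matrix BigOperators

section helpers
variable {E : Type*} [AddCommGroup E] [Module ℝ E]

lemma convexOn_finsetSum {ι : Type*} (s : Finset ι) {S : Set E} (hS : Convex ℝ S)
    {f : ι → E → ℝ} (h : ∀ i ∈ s, ConvexOn ℝ S (f i)) :
    ConvexOn ℝ S (fun x => ∑ i ∈ s, f i x) := by
  classical
  induction s using Finset.cons_induction with
  | empty => simpa using convexOn_const 0 hS
  | cons i s hi ih =>
      simp only [Finset.sum_cons]
      exact (h i (Finset.mem_cons_self i s)).add
        (ih fun j hj => h j (Finset.mem_cons_of_mem hj))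

lemma enorm_eq_norm {n : ℕ} (w : Fin n → ℝ) :
    vecEnorm w = ‖(WithLp.equiv 2 (Fin n → ℝ)).symm w‖ := by
  rw [EuclideanSpace.norm_eq, vecEnorm]
  congr 1
  refine Finset.sum_congr rfl fun t _ => ?_
  simp [Real.norm_eq_abs, sq_abs]

@[simp] lemma psmul_fst {α β : Type*} [SMul ℝ α] [SMul ℝ β] (c : ℝ) (x : α × β) :
    (c • x).1 = c • x.1 := rfl
@[simp] lemma psmul_snd {α β : Type*} [SMul ℝ α] [SMul ℝ β] (c : ℝ) (x : α × β) :
    (c • x).2 = c • x.2 := rfl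
@[simp] lemma padd_fst {α β : Type*} [Add α] [Add β] (x y : α × β) :
    (x + y).1 = x.1 + y.1 := rfl
@[simp] lemma padd_snd {α β : Type*} [Add α] [Add β] (x y : α × β) :
    (x + y).2 = x.2 + y.2 := rfl

end helpers

/-- Joint convexity of the penalized log-likelihood (eq. (5)): the function
`f(φ, α) = Σ_t [−log(R_{t,:}α) + ½(y_t R_{t,:}α − X_{t,:}φ)²]
  + Σ_k λ_k |X_{:,G_k} φ_{G_k}|₂`
is convex on the domain `{(φ, α) : R_{t,:}α > 0 ∀t}`, where `G₁,…,G_K` is a partition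
of `{1,…,p}` and `λ_k ≥ 0`. -/
theorem penalized_loglik_jointly_convex {T p q K : ℕ}
    (X : Matrix (Fin T) (Fin p) ℝ) (R : Matrix (Fin T) (Fin q) ℝ) (y : Fin T → ℝ)
    (G : Fin K → Finset (Fin p))
    (hdisj : ∀ k k', k ≠ k' → Disjoint (G k) (G k'))
    (hcover : Finset.univ.biUnion G = Finset.univ)
    (lam : Fin K → ℝ) (hlam : ∀ k, 0 ≤ lam k) :
    ConvexOn ℝ {pa : (Fin p → ℝ) × (Fin q → ℝ) | ∀ t, 0 < R.mulVec pa.2 t}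
      (fun pa =>
        ∑ t, (-(Real.log (R.mulVec pa.2 t)) +
            (1 / 2) * (y t * R.mulVec pa.2 t - X.mulVec pa.1 t) ^ 2) +
        ∑ k, lam k * vecEnorm (fun t => ∑ j ∈ G k, X t j * pa.1 j)) := by
  classical
  -- linear maps
  have hLt : ∀ t : Fin T, IsLinearMap ℝ (fun pa : (Fin p → ℝ) × (Fin q → ℝ) => R.mulVec pa.2 t) := by
    intro t
    refine ⟨fun x y => ?_, fun c x => ?_⟩
    · simp [padd_snd, Matrix.mulVec_add]
    · simp [psmul_snd, Matrix.mulVec_smul]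
  -- convexity of the domain
  have hS : Convex ℝ {pa : (Fin p → ℝ) × (Fin q → ℝ) | ∀ t, 0 < R.mulVec pa.2 t} := by
    have : {pa : (Fin p → ℝ) × (Fin q → ℝ) | ∀ t, 0 < R.mulVec pa.2 t} =
        ⋂ t, {pa : (Fin p → ℝ) × (Fin q → ℝ) | 0 < R.mulVec pa.2 t} := by
      ext pa; simp
    rw [this]
    exact convex_iInter fun t => convex_halfSpace_gt (hLt t) 0
  refine ConvexOn.add ?_ ?_
  · refine convexOn_finsetSum _ hS fun t _ => ConvexOn.add ?_ ?_
    · -- neg log term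
      have hlog : ConvexOn ℝ (Set.Ioi (0:ℝ)) (fun x => -Real.log x) :=
        strictConcaveOn_log_Ioi.concaveOn.neg
      have := hlog.comp_affineMap ((hLt t).mk' _).toAffineMap
      refine ConvexOn.subset this ?_ hS
      intro pa hpa
      exact hpa t
    · -- quadratic term
      have hM : IsLinearMap ℝ (fun pa : (Fin p → ℝ) × (Fin q → ℝ) => y t * R.mulVec pa.2 t - X.mulVec pa.1 t) := by
        constructor
        · intro a b; simp [padd_fst, padd_snd, Matrix.mulVec_add]; ring
        · intro c a; simp [psmul_fst, psmul_snd, Matrix.mulVec_smul]; ring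
      have hsq : ConvexOn ℝ Set.univ (fun x : ℝ => x ^ 2) :=
        Even.convexOn_pow (even_two)
      have := (hsq.comp_affineMap (hM.mk' _).toAffineMap).smul (by norm_num : (0:ℝ) ≤ 1/2)
      exact ConvexOn.subset this (fun x _ => trivial) hS
  · refine convexOn_finsetSum _ hS fun k _ => ?_
    have hN : IsLinearMap ℝ (fun pa : (Fin p → ℝ) × (Fin q → ℝ) =>
        (WithLp.equiv 2 (Fin T → ℝ)).symm (fun t => ∑ j ∈ G k, X t j * pa.1 j)) := by
      constructor
      · intro a b
        ext t
        simp [padd_fst, mul_add, Finset.sum_add_distrib]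
      · intro c a
        ext t
        simp [psmul_fst, Finset.mul_sum, mul_left_comm]
    have hn : ConvexOn ℝ (Set.univ : Set (EuclideanSpace ℝ (Fin T))) norm :=
      convexOn_univ_norm
    have := (hn.comp_affineMap (hN.mk' _).toAffineMap).smul (hlam k)
    have heq : (fun pa : (Fin p → ℝ) × (Fin q → ℝ) => lam k * vecEnorm (fun t => ∑ j ∈ G k, X t j * pa.1 j)) =
        (fun pa : (Fin p → ℝ) × (Fin q → ℝ) => lam k • (norm ∘ ((hN.mk' _).toAffineMap : (Fin p → ℝ) × (Fin q → ℝ) →ᵃ[ℝ] EuclideanSpace ℝ (Fin T))) pa) := by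
      funext pa
      simp only [smul_eq_mul, Function.comp]
      rw [enorm_eq_norm]
      rfl
    rw [heq]
    exact ConvexOn.subset this (fun x _ => trivial) hS
end
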